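/- For every ideal I of R and every e ∈ ℕ, there exists a smallest ideal among all ideals A of R satisfying I ⊆ A^{[p^e]}; that is, there is an ideal I^{[1/p^e]} (the p^e-th Frobenius root of I) such that I ⊆ (I^{[1/p^e]})^{[p^e]}, and I^{[1/p^e]} ⊆ A for every ideal A of R with I ⊆ A^{[p^e]}. -/

import Mathlib

open Filter

/-- The `q`-th Frobenius power of an ideal `J`:
the ideal generated by the `q`-th powers of the elements of `J`. -/
def frobeniusPower {R : Type*} [CommSemiring R] (J : Ideal R) (q : ℕ) : Ideal R :=
  Ideal.span ((· ^ q) '' (J : Set R))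

set_option linter.unusedSectionVars false
set_option linter.unnecessarySimpa false

namespace FrobRootAux

open MvPolynomial

variable {σ : Type*}

/-- Componentwise division of exponents by `q`. -/
noncomputable def divq (q : ℕ) (c : σ →₀ ℕ) : σ →₀ ℕ := c.mapRange (· / q) (Nat.zero_div q)

/-- Componentwise remainder of exponents mod `q`. -/
noncomputable def modq (q : ℕ) (c : σ →₀ ℕ) : σ →₀ ℕ := c.mapRange (· % q) (Nat.zero_mod q)

@[simp] lemma divq_apply (q : ℕ) (c : σ →₀ ℕ) (i : σ) : divq q c i = c i / q :=
  Finsupp.mapRange_apply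
@[simp] lemma modq_apply (q : ℕ) (c : σ →₀ ℕ) (i : σ) : modq q c i = c i % q :=
  Finsupp.mapRange_apply

lemma divq_add_modq (q : ℕ) (c : σ →₀ ℕ) : q • divq q c + modq q c = c := by
  ext i
  simp only [Finsupp.add_apply, Finsupp.smul_apply, divq_apply, modq_apply, smul_eq_mul]
  exact Nat.div_add_mod _ _

lemma modq_smul_add (q : ℕ) (c d : σ →₀ ℕ) : modq q (q • d + c) = modq q c := by
  ext i
  simp only [modq_apply, Finsupp.add_apply, Finsupp.smul_apply, smul_eq_mul]
  exact Nat.mul_add_mod _ _ _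

lemma modq_eq_self (q : ℕ) (a : σ →₀ ℕ) (ha : ∀ i, a i < q) : modq q a = a := by
  ext i; simp [Nat.mod_eq_of_lt (ha i)]

lemma divq_smul_add (q : ℕ) (hq : 0 < q) (c d : σ →₀ ℕ) :
    divq q (q • d + c) = d + divq q c := by
  ext i
  simp only [divq_apply, Finsupp.add_apply, Finsupp.smul_apply, smul_eq_mul]
  rw [Nat.mul_add_div hq]

lemma divq_eq_zero (q : ℕ) (a : σ →₀ ℕ) (ha : ∀ i, a i < q) : divq q a = 0 := by
  ext i; simp [Nat.div_eq_of_lt (ha i)]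

section Field

variable (p : ℕ) (K : Type*) [Field K] [Fintype K] [CharP K p] [Fact p.Prime]
  (m e : ℕ)

/-- The inverse of the `e`-iterated Frobenius on `K`. -/
noncomputable def ψ : K ≃+* K := (iterateFrobeniusEquiv K p e).symm

lemma ψ_pow (x : K) : (ψ p K e x) ^ p ^ e = x := by
  have := (iterateFrobeniusEquiv K p e).apply_symm_apply x
  rwa [iterateFrobeniusEquiv_def] at this

lemma ψ_of_pow (x : K) : ψ p K e (x ^ p ^ e) = x := by
  have := (iterateFrobeniusEquiv K p e).symm_apply_apply x
  rwa [iterateFrobeniusEquiv_def] at this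

/-- The `a`-th Frobenius-root component of a polynomial `f`:
`coeff b (rt a f) = ψ (coeff (q • b + a) f)` where `q = p ^ e`. -/
noncomputable def rt (a : Fin m →₀ ℕ) (f : MvPolynomial (Fin m) K) :
    MvPolynomial (Fin m) K :=
  AddMonoidAlgebra.ofCoeff <| Finsupp.onFinset (f.support.image fun c => divq (p ^ e) (c - a))
    (fun b => ψ p K e (coeff (p ^ e • b + a) f))
    (fun b hb => by
      have h1 : coeff (p ^ e • b + a) f ≠ 0 := fun h => hb (by
        show ψ p K e _ = 0; rw [h, map_zero])
      refine Finset.mem_image.mpr ⟨p ^ e • b + a, MvPolynomial.mem_support_iff.mpr h1, ?_⟩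
      ext i
      simp only [divq_apply, Finsupp.tsub_apply, Finsupp.add_apply, Finsupp.smul_apply,
        smul_eq_mul, Nat.add_sub_cancel]
      exact Nat.mul_div_cancel_left _ (pow_pos (Fact.out : p.Prime).pos e))

lemma coeff_rt (a b : Fin m →₀ ℕ) (f : MvPolynomial (Fin m) K) :
    coeff b (rt p K m e a f) = ψ p K e (coeff (p ^ e • b + a) f) := rfl

lemma rt_zero (a : Fin m →₀ ℕ) : rt p K m e a 0 = 0 := by
  apply MvPolynomial.ext
  intro b
  simp [coeff_rt]

lemma rt_add (a : Fin m →₀ ℕ) (f g : MvPolynomial (Fin m) K) :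
    rt p K m e a (f + g) = rt p K m e a f + rt p K m e a g := by
  apply MvPolynomial.ext
  intro b
  simp [coeff_rt, coeff_add, map_add]

lemma rt_sum {ι : Type*} (a : Fin m →₀ ℕ) (s : Finset ι)
    (F : ι → MvPolynomial (Fin m) K) :
    rt p K m e a (∑ i ∈ s, F i) = ∑ i ∈ s, rt p K m e a (F i) := by
  classical
  induction s using Finset.induction_on with
  | empty => simp [rt_zero]
  | insert _ _ h ih => rw [Finset.sum_insert h, Finset.sum_insert h, rt_add, ih]

/-- Writing `f ^ (p^e)` as a sum of monomials. -/
lemma hchar (x : MvPolynomial (Fin m) K) :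
    x ^ p ^ e = iterateFrobenius (MvPolynomial (Fin m) K) p e x := rfl

lemma pow_q_eq (f : MvPolynomial (Fin m) K) :
    f ^ p ^ e = ∑ d ∈ f.support, monomial (p ^ e • d) ((coeff d f) ^ p ^ e) := by
  conv_lhs => rw [f.as_sum]
  rw [hchar, map_sum]
  refine Finset.sum_congr rfl fun d _ => ?_
  rw [← hchar, monomial_pow]

lemma coeff_pow_q_smul (b : Fin m →₀ ℕ) (f : MvPolynomial (Fin m) K) :
    coeff (p ^ e • b) (f ^ p ^ e) = (coeff b f) ^ p ^ e := by
  classical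
  have hq : 0 < p ^ e := pow_pos (Fact.out : p.Prime).pos e
  rw [pow_q_eq, coeff_sum]
  have key : ∀ d : Fin m →₀ ℕ, (p ^ e • d = p ^ e • b) ↔ d = b := by
    intro d
    constructor
    · intro h
      ext i
      have := congrArg (fun u : Fin m →₀ ℕ => u i) h
      simp only [Finsupp.smul_apply, smul_eq_mul] at this
      exact Nat.eq_of_mul_eq_mul_left hq this
    · rintro rfl; rfl
  rw [Finset.sum_congr rfl fun d _ => by
    rw [coeff_monomial, if_congr (key d) rfl rfl]]
  rw [Finset.sum_ite_eq' f.support b _]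
  by_cases hb : b ∈ f.support
  · rw [if_pos hb]
  · rw [if_neg hb, MvPolynomial.notMem_support_iff.mp hb, zero_pow hq.ne']

lemma coeff_pow_q_eq_zero (u : Fin m →₀ ℕ) (f : MvPolynomial (Fin m) K)
    (hu : ∃ i, ¬ (p ^ e ∣ u i)) :
    coeff u (f ^ p ^ e) = 0 := by
  classical
  rw [pow_q_eq, coeff_sum]
  refine Finset.sum_eq_zero fun d _ => ?_
  rw [coeff_monomial, if_neg]
  rintro rfl
  obtain ⟨i, hi⟩ := hu
  exact hi ⟨d i, by simp⟩

lemma rt_monomial (a c : Fin m →₀ ℕ) (ha : ∀ i, a i < p ^ e) (v : K) :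
    rt p K m e a (monomial c v) =
      if modq (p ^ e) c = a then monomial (divq (p ^ e) c) (ψ p K e v) else 0 := by
  classical
  have hq : 0 < p ^ e := pow_pos (Fact.out : p.Prime).pos e
  apply MvPolynomial.ext
  intro b
  rw [coeff_rt, coeff_monomial]
  by_cases hmod : modq (p ^ e) c = a
  · rw [if_pos hmod, coeff_monomial]
    have hiff : (c = p ^ e • b + a) ↔ divq (p ^ e) c = b := by
      constructor
      · rintro rfl
        rw [divq_smul_add _ hq, divq_eq_zero _ a ha, add_zero]
      · rintro rfl
        conv_lhs => rw [← divq_add_modq (p ^ e) c, hmod]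
    by_cases hc : c = p ^ e • b + a
    · rw [if_pos hc, if_pos (hiff.mp hc)]
    · rw [if_neg hc, if_neg (fun h => hc (hiff.mpr h)), map_zero]
  · rw [if_neg hmod, coeff_zero, if_neg, map_zero]
    rintro rfl
    exact hmod (by rw [modq_smul_add, modq_eq_self _ a ha])

/-- Key compatibility: `rt a (g ^ q * h) = g * rt a h`. -/
lemma rt_powq_mul (a : Fin m →₀ ℕ) (ha : ∀ i, a i < p ^ e)
    (g h : MvPolynomial (Fin m) K) :
    rt p K m e a (g ^ p ^ e * h) = g * rt p K m e a h := by
  classical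
  have hq : 0 < p ^ e := pow_pos (Fact.out : p.Prime).pos e
  induction h using MvPolynomial.induction_on' with
  | add h1 h2 ih1 ih2 =>
    rw [mul_add, rt_add, ih1, ih2, rt_add, mul_add]
  | monomial c v =>
    induction g using MvPolynomial.induction_on' with
    | add g1 g2 ih1 ih2 =>
      have hadd : (g1 + g2) ^ p ^ e = g1 ^ p ^ e + g2 ^ p ^ e := by
        rw [hchar, hchar, hchar, map_add]
      rw [hadd, add_mul, rt_add, ih1, ih2, add_mul]
    | monomial d w =>
      rw [monomial_pow, monomial_mul, rt_monomial _ _ _ _ _ _ ha,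
        rt_monomial _ _ _ _ _ _ ha, modq_smul_add, divq_smul_add _ hq]
      by_cases hmod : modq (p ^ e) c = a
      · rw [if_pos hmod, if_pos hmod, monomial_mul]
        congr 1
        rw [map_mul, ψ_of_pow]
      · rw [if_neg hmod, if_neg hmod, mul_zero]

/-- The finite set of residue exponents. -/
noncomputable def T : Finset (Fin m →₀ ℕ) :=
  (Finset.univ : Finset (Fin m → Fin (p ^ e))).image
    (fun v => Finsupp.equivFunOnFinite.symm (fun i => (v i : ℕ)))

lemma mem_T_iff (a : Fin m →₀ ℕ) : a ∈ T p m e ↔ ∀ i, a i < p ^ e := by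
  classical
  constructor
  · intro h i
    obtain ⟨v, -, rfl⟩ := Finset.mem_image.mp h
    simpa using (v i).isLt
  · intro h
    refine Finset.mem_image.mpr ⟨fun i => ⟨a i, h i⟩, Finset.mem_univ _, ?_⟩
    ext i
    simp

lemma coeff_powq_mul_monomial (a c : Fin m →₀ ℕ) (ha : ∀ i, a i < p ^ e)
    (g : MvPolynomial (Fin m) K) :
    coeff c (g ^ p ^ e * monomial a 1) =
      if modq (p ^ e) c = a then (coeff (divq (p ^ e) c) g) ^ p ^ e else 0 := by
  classical
  have hq : 0 < p ^ e := pow_pos (Fact.out : p.Prime).pos e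
  rw [coeff_mul_monomial']
  by_cases hmod : modq (p ^ e) c = a
  · have hle : a ≤ c := by
      rw [Finsupp.le_def]
      intro i
      have : a i = c i % p ^ e := by rw [← hmod, modq_apply]
      rw [this]
      exact Nat.mod_le _ _
    have hsub : c - a = p ^ e • divq (p ^ e) c := by
      ext i
      have hai : a i = c i % p ^ e := by rw [← hmod, modq_apply]
      have h2 := Nat.div_add_mod (c i) (p ^ e)
      simp only [Finsupp.tsub_apply, Finsupp.smul_apply, divq_apply, smul_eq_mul]
      omega
    rw [if_pos hle, hsub, coeff_pow_q_smul, mul_one, if_pos hmod]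
  · rw [if_neg hmod]
    by_cases hle : a ≤ c
    · rw [if_pos hle, coeff_pow_q_eq_zero, zero_mul]
      have hex : ∃ i, c i % p ^ e ≠ a i := by
        by_contra hcon
        push_neg at hcon
        exact hmod (by ext i; rw [modq_apply, hcon i])
      obtain ⟨i, hi⟩ := hex
      refine ⟨i, fun hdvd => hi ?_⟩
      rw [Finsupp.tsub_apply] at hdvd
      obtain ⟨k, hk⟩ := hdvd
      have hle' := Finsupp.le_def.mp hle i
      have hci : c i = a i + p ^ e * k := by omega
      rw [hci, Nat.add_mul_mod_self_left, Nat.mod_eq_of_lt (ha i)]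
    · rw [if_neg hle]

/-- The Frobenius-root decomposition of a polynomial. -/
lemma decomposition (f : MvPolynomial (Fin m) K) :
    f = ∑ a ∈ T p m e, (rt p K m e a f) ^ p ^ e * monomial a 1 := by
  classical
  have hq : 0 < p ^ e := pow_pos (Fact.out : p.Prime).pos e
  apply MvPolynomial.ext
  intro c
  rw [coeff_sum]
  rw [Finset.sum_congr rfl fun a haT =>
    coeff_powq_mul_monomial p K m e a c ((mem_T_iff p m e a).mp haT) _]
  rw [Finset.sum_ite_eq (T p m e) (modq (p ^ e) c) _]
  rw [if_pos ((mem_T_iff p m e _).mpr fun i => by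
    rw [modq_apply]; exact Nat.mod_lt _ hq)]
  rw [coeff_rt, divq_add_modq, ψ_pow]

lemma rt_mem (A : Ideal (MvPolynomial (Fin m) K)) (f : MvPolynomial (Fin m) K)
    (hf : f ∈ frobeniusPower A (p ^ e)) (a : Fin m →₀ ℕ) (ha : ∀ i, a i < p ^ e) :
    rt p K m e a f ∈ A := by
  classical
  induction hf using Submodule.span_induction generalizing a with
  | mem x hx =>
    obtain ⟨y, hy, rfl⟩ := hx
    have h1 : y ^ p ^ e = y ^ p ^ e * 1 := (mul_one _).symm
    show rt p K m e a (y ^ p ^ e) ∈ A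
    rw [h1, rt_powq_mul _ _ _ _ _ ha]
    exact Ideal.mul_mem_right _ A hy
  | zero =>
    rw [rt_zero]
    exact A.zero_mem
  | add x y hx hy ihx ihy =>
    rw [rt_add]
    exact A.add_mem (ihx a ha) (ihy a ha)
  | smul r x hx ih =>
    rw [smul_eq_mul]
    have hr : r * x = ∑ a' ∈ T p m e,
        (rt p K m e a' r) ^ p ^ e * (monomial a' 1 * x) := by
      conv_lhs => rw [decomposition p K m e r]
      rw [Finset.sum_mul]
      exact Finset.sum_congr rfl fun _ _ => by ring
    rw [hr, rt_sum]
    refine Ideal.sum_mem _ fun a' _ => ?_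
    rw [rt_powq_mul _ _ _ _ _ ha]
    refine Ideal.mul_mem_left _ _ ?_
    have hx2 : monomial a' 1 * x = ∑ a'' ∈ T p m e,
        (rt p K m e a'' x) ^ p ^ e * (monomial a' 1 * monomial a'' 1) := by
      conv_lhs => rw [decomposition p K m e x]
      rw [Finset.mul_sum]
      exact Finset.sum_congr rfl fun _ _ => by ring
    rw [hx2, rt_sum]
    refine Ideal.sum_mem _ fun a'' ha'' => ?_
    rw [rt_powq_mul _ _ _ _ _ ha]
    exact Ideal.mul_mem_right _ _ (ih a'' ((mem_T_iff p m e a'').mp ha''))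

end Field

end FrobRootAux

/-- Frobenius roots exist: for every ideal `I` of the polynomial ring and every `e`,
there is a smallest ideal `I^{[1/p^e]}` among all ideals `A` with `I ⊆ A^{[p^e]}`. -/
theorem frobeniusRoot_exists
    (p : ℕ) (hp : p.Prime) (K : Type*) [Field K] [Fintype K] [CharP K p]
    (m : ℕ) (I : Ideal (MvPolynomial (Fin m) K)) (e : ℕ) :
    ∃ Iroot : Ideal (MvPolynomial (Fin m) K),
      I ≤ frobeniusPower Iroot (p ^ e) ∧
        ∀ A : Ideal (MvPolynomial (Fin m) K), I ≤ frobeniusPower A (p ^ e) → Iroot ≤ A := by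
  haveI := Fact.mk hp
  classical
  open FrobRootAux in
  refine ⟨Ideal.span {g | ∃ f ∈ I, ∃ a ∈ T p m e, rt p K m e a f = g}, ?_, ?_⟩
  · intro f hf
    rw [decomposition p K m e f]
    refine Ideal.sum_mem _ fun a haT => ?_
    refine Ideal.mul_mem_right _ _ (Ideal.subset_span ?_)
    exact Set.mem_image_of_mem _ (Ideal.subset_span ⟨f, hf, a, haT, rfl⟩)
  · intro A hA
    rw [Ideal.span_le]
    rintro g ⟨f, hfI, a, haT, rfl⟩
    exact rt_mem p K m e A f (hA hfI) a ((mem_T_iff p m e a).mp haT)
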